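/- Let g, h : Γ* → Δ* be monoid morphisms with Γ and Δ disjoint alphabets, and let L = {g(w) · reverse(u) · h(u) · reverse(w) : u, w ∈ Γ+}. Then L contains a square (a word of the form zz) if and only if there exists a nonempty word x ∈ Γ+ with g(x) = h(x). -/

import Mathlib

section Aux
variable {Γ Δ : Type*}

private lemma aux_mem_inl {l : List Γ} {x : Γ ⊕ Δ} (hx : x ∈ l.map Sum.inl) :
    ∃ γ, x = Sum.inl γ := by
  obtain ⟨γ, -, rfl⟩ := List.mem_map.mp hx
  exact ⟨γ, rfl⟩

private lemma aux0 : ∀ (X X' : List Δ) (Y Y' : List Γ),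
    (X.map Sum.inr ++ Y.map Sum.inl : List (Γ ⊕ Δ)) = X'.map Sum.inr ++ Y'.map Sum.inl →
    X = X' ∧ Y = Y' := by
  intro X
  induction X with
  | nil =>
    rintro (_ | ⟨x', X'⟩) Y Y' hEq
    · refine ⟨rfl, ?_⟩
      simp only [List.map_nil, List.nil_append] at hEq
      exact List.map_injective_iff.mpr Sum.inl_injective hEq
    · cases Y <;> simp at hEq
  | cons x X ih =>
    rintro (_ | ⟨x', X'⟩) Y Y' hEq
    · cases Y' <;> simp at hEq
    · simp only [List.map_cons, List.cons_append, List.cons.injEq] at hEq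
      obtain ⟨h1, h2⟩ := hEq
      obtain ⟨h3, h4⟩ := ih X' Y Y' h2
      exact ⟨by rw [Sum.inr.inj h1, h3], h4⟩

/-- Extract the sandwich structure from `Y.map inl = P ++ X.map inl ++ Q`. -/
private lemma aux_sandwich {Y X : List Γ} {P Q : List (Γ ⊕ Δ)}
    (hEq : Y.map Sum.inl = P ++ X.map Sum.inl ++ Q) :
    ∃ p q : List Γ, Y = p ++ X ++ q := by
  rw [List.append_assoc] at hEq
  obtain ⟨p, rest, rfl, hp, hrest⟩ := List.map_eq_append_iff.mp hEq
  obtain ⟨x', q, rfl, hx', hq⟩ := List.map_eq_append_iff.mp hrest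
  have : x' = X := List.map_injective_iff.mpr Sum.inl_injective hx'
  exact ⟨p, q, by rw [this, List.append_assoc]⟩

/-- Core combinatorial lemma about the square. -/
private lemma aux_key (z : List (Γ ⊕ Δ)) (G H : List Δ) (u w : List Γ) (hw : w ≠ [])
    (hs : z ++ z = G.map Sum.inr ++ u.reverse.map Sum.inl ++ H.map Sum.inr
      ++ w.reverse.map Sum.inl) :
    (G = H ∧ u = w) ∨ (G = [] ∧ H = [] ∧ ∃ p q, u = p ++ w ++ q)
      ∨ (G = [] ∧ H = [] ∧ ∃ p q, w = p ++ u ++ q) := by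
  set A : List (Γ ⊕ Δ) := G.map Sum.inr with hA
  set B : List (Γ ⊕ Δ) := u.reverse.map Sum.inl with hB
  set C : List (Γ ⊕ Δ) := H.map Sum.inr with hC
  set D : List (Γ ⊕ Δ) := w.reverse.map Sum.inl with hD
  have hwr : w.reverse ≠ [] := by simpa using hw
  have hDne : D ≠ [] := by simp only [hD, ne_eq, List.map_eq_nil_iff]; exact hwr
  rw [List.append_assoc, List.append_assoc] at hs
  have hsAB : z ++ z = (A ++ B) ++ (C ++ D) := by
    rw [hs]; simp [List.append_assoc]
  have hlen : z.length + z.length = (A ++ B).length + (C ++ D).length := by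
    have := congrArg List.length hsAB
    simp only [List.length_append] at this ⊢
    omega
  rcases le_or_gt z.length (A ++ B).length with hle | hlt
  · -- first copy of z is a prefix of A ++ B
    have htake : (A ++ B).take z.length = z := by
      rw [← List.take_append_of_le_length hle, ← hsAB, List.take_left]
    have h1 : A ++ B = z ++ (A ++ B).drop z.length := by
      conv_lhs => rw [← List.take_append_drop z.length (A ++ B), htake]
    set E := (A ++ B).drop z.length with hE
    have h2 : z = E ++ (C ++ D) := by
      rw [h1, List.append_assoc] at hsAB
      exact List.append_cancel_left hsAB
    rcases le_or_gt A.length z.length with hAz | hAz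
    · -- z = A ++ B₁, E = B₂
      set B₁ := B.take (z.length - A.length) with hB₁
      set B₂ := B.drop (z.length - A.length) with hB₂
      have hBsplit : B = B₁ ++ B₂ := (List.take_append_drop _ _).symm
      have hle' : z.length ≤ A.length + B.length := by
        rw [List.length_append] at hle; exact hle
      have hlenB₁ : B₁.length = z.length - A.length := by
        rw [hB₁, List.length_take]; omega
      have h3 : (A ++ B₁) ++ B₂ = z ++ E := by
        rw [List.append_assoc, ← hBsplit]; exact h1
      obtain ⟨hz1, hE1⟩ := List.append_inj h3
        (by rw [List.length_append, hlenB₁]; omega)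
      -- hz1 : A ++ B₁ = z ; hE1 : B₂ = E
      have h4 : A ++ B₁ = B₂ ++ (C ++ D) := by rw [hz1, h2, hE1]
      by_cases hG : G = []
      · have hAnil : A = [] := by rw [hA, hG]; rfl
        by_cases hH : H = []
        · -- outcome 2
          have hCnil : C = [] := by rw [hC, hH]; rfl
          rw [hAnil, List.nil_append, hCnil, List.nil_append] at h4
          have h6 : B = B₂ ++ D ++ B₂ := by
            rw [hBsplit, h4, List.append_assoc]
          right; left
          refine ⟨hG, hH, ?_⟩
          obtain ⟨p, q, hpq⟩ := aux_sandwich (X := w.reverse) (Y := u.reverse)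
            (P := B₂) (Q := B₂) (by rw [← hB, ← hD]; exact h6)
          refine ⟨q.reverse, p.reverse, ?_⟩
          have := congrArg List.reverse hpq
          simpa [List.reverse_append] using this
        · -- H = c :: H' : contradiction
          exfalso
          obtain ⟨c, H', hHc⟩ := List.exists_cons_of_ne_nil hH
          rw [hAnil, List.nil_append] at h4
          have hmem : Sum.inr c ∈ B₁ := by rw [h4, hC, hHc]; simp
          have hmem' : Sum.inr c ∈ B := by
            rw [hBsplit]; exact List.mem_append_left _ hmem
          obtain ⟨γ, hγ⟩ := aux_mem_inl (hB ▸ hmem')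
          exact absurd hγ (by simp)
      · obtain ⟨d, G', hGd⟩ := List.exists_cons_of_ne_nil hG
        by_cases hB2 : B₂ = []
        · -- main case : z = A ++ B = C ++ D
          have hBeq : B = B₁ := by rw [hBsplit, hB2, List.append_nil]
          have hzCD : z = C ++ D := by rw [h2, ← hE1, hB2, List.nil_append]
          have hmain : A ++ B = C ++ D := by rw [hBeq, hz1, hzCD]
          rw [hA, hB, hC, hD] at hmain
          obtain ⟨hGH, huw⟩ := aux0 G H u.reverse w.reverse hmain
          left
          exact ⟨hGH, List.reverse_injective huw⟩
        · exfalso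
          obtain ⟨e, B₂', hB2'⟩ := List.exists_cons_of_ne_nil hB2
          have h5 := h4
          rw [hA, hGd, hB2'] at h5
          simp only [List.map_cons, List.cons_append, List.cons.injEq] at h5
          obtain ⟨he, -⟩ := h5
          have hmem : e ∈ B := by
            rw [hBsplit, hB2']
            exact List.mem_append_right _ (List.mem_cons_self (a := e) (l := B₂'))
          obtain ⟨γ, hγ⟩ := aux_mem_inl (hB ▸ hmem)
          rw [← he] at hγ
          exact absurd hγ (by simp)
    · -- z.length < A.length : z ⊆ A, but D's head ∈ z — contradiction
      exfalso
      have hA1len : (A.take z.length).length = z.length := by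
        rw [List.length_take]; omega
      have h3 : z ++ E = A.take z.length ++ (A.drop z.length ++ B) := by
        rw [← List.append_assoc, List.take_append_drop]; exact h1.symm
      obtain ⟨hz1, -⟩ := List.append_inj h3 hA1len.symm
      obtain ⟨γ, t, hwrc⟩ := List.exists_cons_of_ne_nil hwr
      have hmem : Sum.inl γ ∈ z := by rw [h2, hD, hwrc]; simp
      have hmem' : Sum.inl γ ∈ A := by
        rw [hz1] at hmem
        exact List.take_subset _ _ hmem
      rw [hA] at hmem'
      obtain ⟨δ, -, hδ⟩ := List.mem_map.mp hmem'
      exact absurd hδ (by simp)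
  · -- z = (A ++ B) ++ F
    have htake : z.take (A ++ B).length = A ++ B := by
      have h0 : (z ++ z).take (A ++ B).length = z.take (A ++ B).length :=
        List.take_append_of_le_length (le_of_lt hlt)
      rw [← h0, hsAB, List.take_left]
    have h1 : z = (A ++ B) ++ z.drop (A ++ B).length := by
      conv_lhs => rw [← List.take_append_drop (A ++ B).length z, htake]
    set F := z.drop (A ++ B).length with hF
    have h2 : F ++ z = C ++ D := by
      have h2' := hsAB
      rw [h1, List.append_assoc] at h2'
      have h2'' := List.append_cancel_left h2'
      rw [← h1] at h2''
      exact h2''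
    rcases le_or_gt F.length C.length with hFC | hFC
    · have hClen : (C.take F.length).length = F.length := by
        rw [List.length_take]; omega
      have h3 : F ++ z = C.take F.length ++ (C.drop F.length ++ D) := by
        rw [← List.append_assoc, List.take_append_drop]; exact h2
      obtain ⟨hF1, hz1⟩ := List.append_inj h3 hClen.symm
      by_cases hFnil : F = []
      · -- main case
        have hCeq : C.drop F.length = C := by rw [hFnil]; simp
        have hz' : z = A ++ B := by rw [h1, hFnil, List.append_nil]
        have hmain : A ++ B = C ++ D := by rw [← hz', hz1, hCeq]
        rw [hA, hB, hC, hD] at hmain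
        obtain ⟨hGH, huw⟩ := aux0 G H u.reverse w.reverse hmain
        left
        exact ⟨hGH, List.reverse_injective huw⟩
      · exfalso
        have h4 : A ++ B ++ F = C.drop F.length ++ D := by rw [← h1]; exact hz1
        have h5 := congrArg List.reverse h4
        simp only [List.reverse_append] at h5
        obtain ⟨x, xs, hFr⟩ := List.exists_cons_of_ne_nil
          ((not_iff_not.mpr List.reverse_eq_nil_iff).mpr hFnil)
        obtain ⟨y, ys, hDr⟩ := List.exists_cons_of_ne_nil
          ((not_iff_not.mpr List.reverse_eq_nil_iff).mpr hDne)
        rw [hFr, hDr] at h5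
        simp only [List.cons_append, List.cons.injEq] at h5
        obtain ⟨hxy, -⟩ := h5
        have hxF : x ∈ F := List.mem_reverse.mp (by rw [hFr]; exact List.mem_cons_self (a := x) (l := xs))
        have hxC : x ∈ C := by
          rw [hF1] at hxF
          exact List.take_subset _ _ hxF
        have hyD : y ∈ D := List.mem_reverse.mp (by rw [hDr]; exact List.mem_cons_self (a := y) (l := ys))
        obtain ⟨γ, hγ⟩ := aux_mem_inl (hD ▸ hyD)
        rw [hC] at hxC
        obtain ⟨δ, -, hδ⟩ := List.mem_map.mp hxC
        rw [← hxy, ← hδ] at hγ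
        exact absurd hγ (by simp)
    · -- C is a proper prefix of F ; z is a suffix of D hence all inl
      have hFlen : (F.take C.length).length = C.length := by
        rw [List.length_take]; omega
      have h3 : (F.take C.length) ++ (F.drop C.length ++ z) = C ++ D := by
        rw [← List.append_assoc, List.take_append_drop]; exact h2
      obtain ⟨hF1, hz1⟩ := List.append_inj h3 hFlen
      -- hz1 : F.drop C.length ++ z = D
      have hzinl : ∀ x ∈ z, ∃ γ, x = Sum.inl γ := by
        intro x hx
        have : x ∈ D := by rw [← hz1]; exact List.mem_append_right _ hx
        exact aux_mem_inl (hD ▸ this)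
      by_cases hG : G = []
      · by_cases hH : H = []
        · have hAnil : A = [] := by rw [hA, hG]; rfl
          have hCnil : C = [] := by rw [hC, hH]; rfl
          have hFF₂ : F.drop C.length = F := by rw [hCnil]; simp
          have hzBF : z = B ++ F.drop C.length := by
            rw [hFF₂, h1, hAnil, List.nil_append]
          have h6 : D = F.drop C.length ++ B ++ F.drop C.length := by
            rw [← hz1, hzBF, List.append_assoc]
          right; right
          refine ⟨hG, hH, ?_⟩
          obtain ⟨p, q, hpq⟩ := aux_sandwich (X := u.reverse) (Y := w.reverse)
            (P := F.drop C.length) (Q := F.drop C.length)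
            (by rw [← hB, ← hD, h6])
          refine ⟨q.reverse, p.reverse, ?_⟩
          have := congrArg List.reverse hpq
          simpa [List.reverse_append] using this
        · exfalso
          obtain ⟨c, H', hHc⟩ := List.exists_cons_of_ne_nil hH
          have hmemF : Sum.inr c ∈ F := by
            have : Sum.inr c ∈ F.take C.length := by rw [hF1, hC, hHc]; simp
            exact List.take_subset _ _ this
          have hmem : Sum.inr c ∈ z := by
            rw [h1]; exact List.mem_append_right _ hmemF
          obtain ⟨γ, hγ⟩ := hzinl _ hmem
          exact absurd hγ (by simp)
      · exfalso
        obtain ⟨d, G', hGd⟩ := List.exists_cons_of_ne_nil hG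
        have hmem : Sum.inr d ∈ z := by
          rw [h1, hA, hGd]; simp
        obtain ⟨γ, hγ⟩ := hzinl _ hmem
        exact absurd hγ (by simp)

end Aux

/-- For morphisms `g h : Γ* → Δ*` over disjoint alphabets (modelled as the two summands of
`Γ ⊕ Δ`), the language `L = {g(w)·uʳ·h(u)·wʳ : u, w ∈ Γ⁺}` contains a square `zz` iff
there is a nonempty `x` with `g x = h x`. -/
theorem stmt_9 {Γ Δ : Type*} (g h : List Γ → List Δ)
    (hg : ∀ x y, g (x ++ y) = g x ++ g y) (hh : ∀ x y, h (x ++ y) = h x ++ h y) :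
    (∃ z : List (Γ ⊕ Δ), z ++ z ∈
      {s | ∃ u w : List Γ, u ≠ [] ∧ w ≠ [] ∧
        s = (g w).map Sum.inr ++ u.reverse.map Sum.inl ++
            (h u).map Sum.inr ++ w.reverse.map Sum.inl}) ↔
    ∃ x : List Γ, x ≠ [] ∧ g x = h x := by
  constructor
  · rintro ⟨z, u, w, hu, hw, hs⟩
    rcases aux_key z (g w) (h u) u w hw hs with ⟨hGH, huw⟩ | ⟨hG, hH, p, q, hpq⟩
      | ⟨hG, hH, p, q, hpq⟩
    · exact ⟨u, hu, by rw [← huw] at hGH; exact hGH⟩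
    · refine ⟨w, hw, ?_⟩
      rw [hG]
      have h7 : h p ++ h w ++ h q = [] := by rw [← hh, ← hh, ← hpq, hH]
      simp only [List.append_eq_nil_iff] at h7
      exact h7.1.2.symm
    · refine ⟨u, hu, ?_⟩
      rw [hH]
      have h7 : g p ++ g u ++ g q = [] := by rw [← hg, ← hg, ← hpq, hG]
      simp only [List.append_eq_nil_iff] at h7
      exact h7.1.2
  · rintro ⟨x, hx, hgx⟩
    refine ⟨(g x).map Sum.inr ++ x.reverse.map Sum.inl, x, x, hx, hx, ?_⟩
    rw [hgx]
    simp [List.append_assoc]
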